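/- arXiv:1409.0141 — 2 statements merged into one kernel-verified Lean document; each statement's English description precedes it below -/
import Mathlib

section
/- Let T be the ℵ₀-regular tree, λ the permutation representation of Aut(T), L* : ℓ_∞(T) → ℓ_∞(T) the adjoint of the parent operator L, and d(g) = L*λ(g) − λ(g)L* the associated derivation. If A : ℓ₂(T) → ℂ^T is any linear operator (not assumed bounded) with d(g) = Aλ(g) − λ(g)A for all g ∈ Aut(T), then A = L* + ϑ·Id for some ϑ ∈ ℂ. -/
open scoped ENNReal

noncomputable section

/-- The vertex set of the `ℵ₀`-regular tree, realised as the free group `F_∞`. -/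
abbrev V : Type := FreeGroup ℕ

/-- The Cayley graph of `F_∞` with respect to its free generating set:
the `ℵ₀`-regular tree `T`. -/
def treeGraph : SimpleGraph V :=
  SimpleGraph.fromRel (fun s t => ∃ i : ℕ, t = s * FreeGroup.of i)

/-- The automorphism group `Aut(T)` of the `ℵ₀`-regular tree. -/
abbrev TreeAut := treeGraph ≃g treeGraph

/-- `ℓ_p(T)`. -/
abbrev lpT (p : ℝ≥0∞) := lp (fun _ : V => ℂ) p

lemma memℓp_comp {p : ℝ≥0∞} (g : V ≃ V) {x : V → ℂ} (h : Memℓp x p) :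
    Memℓp (fun v => x (g v)) p := by
  rcases ENNReal.trichotomy p with rfl | rfl | hp
  · rw [memℓp_zero_iff] at h ⊢
    exact Set.Finite.preimage g.injective.injOn h
  · rw [memℓp_infty_iff] at h ⊢
    apply h.mono
    rintro r ⟨v, rfl⟩
    exact ⟨g v, rfl⟩
  · apply memℓp_gen
    exact (g.summable_iff (f := fun v => ‖x v‖ ^ p.toReal)).2 ((memℓp_gen_iff hp).1 h)

/-- The shift representation of permutations of `T` on `ℂ^T`: `λ(g)x = x(g⁻¹ ·)`. -/
def lamFull (g : V ≃ V) : (V → ℂ) →ₗ[ℂ] (V → ℂ) where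
  toFun x := fun v => x (g.symm v)
  map_add' _ _ := rfl
  map_smul' _ _ := rfl

/-- The shift representation of permutations of `T` on `ℓ_p(T)`: `λ(g)x = x(g⁻¹ ·)`. -/
def lam (p : ℝ≥0∞) (g : V ≃ V) : lpT p →ₗ[ℂ] lpT p where
  toFun x := ⟨fun v => x (g.symm v), memℓp_comp g.symm (lp.memℓp x)⟩
  map_add' _ _ := rfl
  map_smul' _ _ := rfl

attribute [local instance] Classical.propDecidable

/-- The fixed root `e` of the tree. -/
def root : V := 1

/-- `ŝ`: the parent of the vertex `s`, i.e. the penultimate vertex on the geodesic from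
the root `e` to `s` (with `ê = e`), obtained by dropping the last letter of the reduced
word `s`. -/
def parent (s : V) : V := FreeGroup.mk s.toWord.dropLast

/-- The adjoint `L*` of the parent operator `L`, as an operator on `ℂ^T`:
`(L* y)(s) = y(ŝ)` for `s ≠ e` and `(L* y)(e) = 0`; equivalently `L*(𝟙_s) = Σ_{t̂ = s} 𝟙_t`. -/
def Lstar : (V → ℂ) →ₗ[ℂ] (V → ℂ) where
  toFun x := fun v => if v = root then 0 else x (parent v)
  map_add' x y := by
    funext v; by_cases h : v = root <;> simp [h]
  map_smul' c x := by
    funext v; by_cases h : v = root <;> simp [h]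

/-- The derivation `d(g) = L*λ(g) − λ(g)L*`, as an operator on `ℂ^T`. -/
def dtree (g : V ≃ V) : (V → ℂ) →ₗ[ℂ] (V → ℂ) :=
  Lstar ∘ₗ lamFull g - lamFull g ∘ₗ Lstar


namespace TreeRig

abbrev Alpha := List (Fin 3)

def ee : ℕ ≃ Alpha :=
  (@Denumerable.eqv Alpha (Denumerable.ofEncodableOfInfinite Alpha)).symm

def runlen (i : Fin 3) (l : Alpha) : ℕ := (l.takeWhile (fun j => decide (j = i))).length

lemma runlen_cons (i j : Fin 3) (l : Alpha) :
    runlen i (j :: l) = if j = i then runlen i l + 1 else 0 := by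
  by_cases h : j = i <;> simp [runlen, List.takeWhile_cons, h]

lemma exists_cons_of_odd {i : Fin 3} {l : Alpha} (h : Odd (runlen i l)) :
    ∃ t, l = i :: t := by
  cases l with
  | nil => simp [runlen] at h
  | cons j t =>
    by_cases hj : j = i
    · exact ⟨t, by rw [hj]⟩
    · rw [runlen_cons, if_neg hj] at h
      simp at h

def tau (i : Fin 3) (l : Alpha) : Alpha :=
  if Odd (runlen i l) then l.tail else i :: l

lemma tau_of_odd {i : Fin 3} {l : Alpha} (h : Odd (runlen i l)) : tau i l = l.tail := if_pos h

lemma tau_of_even {i : Fin 3} {l : Alpha} (h : ¬ Odd (runlen i l)) : tau i l = i :: l := if_neg h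

lemma odd_tau (i : Fin 3) (l : Alpha) :
    Odd (runlen i (tau i l)) ↔ ¬ Odd (runlen i l) := by
  by_cases h : Odd (runlen i l)
  · obtain ⟨t, rfl⟩ := exists_cons_of_odd h
    rw [tau_of_odd h]
    obtain ⟨t2, h2⟩ : ∃ t2, runlen i (i :: t) = runlen i t + 1 := ⟨0, by rw [runlen_cons, if_pos rfl]⟩
    simp only [List.tail_cons, h2, Nat.odd_add_one, Nat.not_even_iff_odd, not_not]
  · rw [tau_of_even h, runlen_cons, if_pos rfl]
    simp [Nat.odd_add_one, h]

lemma tau_tau (i : Fin 3) (l : Alpha) : tau i (tau i l) = l := by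
  by_cases h : Odd (runlen i l)
  · have h2 : ¬ Odd (runlen i (tau i l)) := by rw [odd_tau]; simpa using h
    obtain ⟨t, rfl⟩ := exists_cons_of_odd h
    rw [tau_of_odd h] at h2 ⊢
    rw [tau_of_even h2]
    simp
  · have h2 : Odd (runlen i (tau i l)) := (odd_tau i l).2 h
    rw [tau_of_even h] at h2 ⊢
    rw [tau_of_odd h2]
    simp

lemma tau_ne (i : Fin 3) (l : Alpha) : tau i l ≠ l := by
  intro hcon
  by_cases h : Odd (runlen i l)
  · obtain ⟨t, rfl⟩ := exists_cons_of_odd h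
    rw [tau_of_odd h] at hcon
    simp only [List.tail_cons] at hcon
    exact (List.cons_ne_self i t) hcon.symm
  · rw [tau_of_even h] at hcon
    exact (List.cons_ne_self i l) hcon

lemma odd_unique {i j : Fin 3} {l : Alpha} (hi : Odd (runlen i l)) (hj : Odd (runlen j l)) :
    i = j := by
  obtain ⟨t, rfl⟩ := exists_cons_of_odd hi
  obtain ⟨t', ht'⟩ := exists_cons_of_odd hj
  injection ht' with h1 _

def sigmaPerm (i : Fin 3) : ℕ ≃ ℕ where
  toFun n := ee.symm (tau i (ee n))
  invFun n := ee.symm (tau i (ee n))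
  left_inv n := by simp [tau_tau]
  right_inv n := by simp [tau_tau]

lemma sigmaPerm_sigmaPerm (i : Fin 3) (n : ℕ) : sigmaPerm i (sigmaPerm i n) = n := by
  simp [sigmaPerm, tau_tau]

lemma sigmaPerm_ne (i : Fin 3) (n : ℕ) : sigmaPerm i n ≠ n := by
  intro h
  apply tau_ne i (ee n)
  have := congrArg ee h
  simpa [sigmaPerm] using this

lemma odd_sigmaPerm (i : Fin 3) (n : ℕ) :
    Odd (runlen i (ee (sigmaPerm i n))) ↔ ¬ Odd (runlen i (ee n)) := by
  simp [sigmaPerm, odd_tau]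

lemma odd_unique' {i j : Fin 3} {n : ℕ} (hi : Odd (runlen i (ee n))) (hj : Odd (runlen j (ee n))) :
    i = j := odd_unique hi hj


lemma reduce_map (σ : ℕ → ℕ) (hσ : Function.Injective σ) (L : List (ℕ × Bool)) :
    FreeGroup.reduce (L.map (fun p => (σ p.1, p.2))) =
      (FreeGroup.reduce L).map (fun p => (σ p.1, p.2)) := by
  induction L with
  | nil => simp
  | cons hd tl ih =>
    rw [List.map_cons, FreeGroup.reduce.cons, FreeGroup.reduce.cons, ih]
    cases h : FreeGroup.reduce tl with
    | nil => simp
    | cons hd2 tl2 =>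
      simp only [List.map_cons]
      by_cases hc : hd.1 = hd2.1 ∧ hd.2 = !hd2.2
      · rw [if_pos hc, if_pos ⟨congrArg σ hc.1, hc.2⟩]
      · rw [if_neg hc, if_neg (by
          rintro ⟨h1, h2⟩
          exact hc ⟨hσ h1, h2⟩)]
        simp

lemma toWord_map (σ : ℕ ≃ ℕ) (v : V) :
    (FreeGroup.map σ v).toWord = v.toWord.map (fun p => (σ p.1, p.2)) := by
  conv_lhs => rw [← FreeGroup.mk_toWord (x := v)]
  rw [FreeGroup.map.mk, FreeGroup.toWord_mk, reduce_map σ σ.injective, FreeGroup.reduce_toWord]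



section GE
variable (σ : ℕ ≃ ℕ) (hσσ : ∀ n, σ (σ n) = n)

lemma map_map_self (v : V) (hσσ : ∀ n, σ (σ n) = n) :
    FreeGroup.map σ (FreeGroup.map σ v) = v := by
  apply FreeGroup.toWord_injective
  rw [toWord_map, toWord_map, List.map_map]
  have hfun : ((fun p : ℕ × Bool => (σ p.1, p.2)) ∘ (fun p : ℕ × Bool => (σ p.1, p.2))) = id :=
    funext fun p => by simp [hσσ]
  rw [hfun, List.map_id]

/-- the induced involution of `V`. -/
def GEquiv (hσσ : ∀ n, σ (σ n) = n) : V ≃ V where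
  toFun := FreeGroup.map σ
  invFun := FreeGroup.map σ
  left_inv v := map_map_self σ v hσσ
  right_inv v := map_map_self σ v hσσ

lemma GEquiv_symm : (GEquiv σ hσσ).symm = GEquiv σ hσσ := rfl

lemma GEquiv_one : GEquiv σ hσσ 1 = 1 := map_one (FreeGroup.map σ)

lemma GEquiv_ne_one {v : V} (hv : v ≠ 1) : GEquiv σ hσσ v ≠ 1 := by
  intro h
  apply hv
  rw [← map_map_self σ v hσσ]
  show FreeGroup.map σ (GEquiv σ hσσ v) = 1
  rw [h, map_one]

/-- the graph automorphism induced by a permutation of the generators. -/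
def sigmaAut : TreeAut where
  toEquiv := GEquiv σ hσσ
  map_rel_iff' := by
    intro a b
    simp only [treeGraph, SimpleGraph.fromRel_adj]
    constructor
    · rintro ⟨hne, h | h⟩
      · obtain ⟨k, hk⟩ := h
        refine ⟨fun hab => hne (by rw [hab]), Or.inl ⟨σ k, ?_⟩⟩
        have := congrArg (FreeGroup.map σ) hk
        rw [map_mul,
            show (FreeGroup.map (σ : ℕ → ℕ)) ((GEquiv σ hσσ) b) = b from map_map_self σ b hσσ,
            show (FreeGroup.map (σ : ℕ → ℕ)) ((GEquiv σ hσσ) a) = a from map_map_self σ a hσσ,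
            show (FreeGroup.map (σ : ℕ → ℕ)) (FreeGroup.of k) = FreeGroup.of (σ k)
              from FreeGroup.map.of] at this
        exact this
      · obtain ⟨k, hk⟩ := h
        refine ⟨fun hab => hne (by rw [hab]), Or.inr ⟨σ k, ?_⟩⟩
        have := congrArg (FreeGroup.map σ) hk
        rw [map_mul,
            show (FreeGroup.map (σ : ℕ → ℕ)) ((GEquiv σ hσσ) a) = a from map_map_self σ a hσσ,
            show (FreeGroup.map (σ : ℕ → ℕ)) ((GEquiv σ hσσ) b) = b from map_map_self σ b hσσ,
            show (FreeGroup.map (σ : ℕ → ℕ)) (FreeGroup.of k) = FreeGroup.of (σ k)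
              from FreeGroup.map.of] at this
        exact this
    · rintro ⟨hne, h | h⟩
      · obtain ⟨k, rfl⟩ := h
        refine ⟨fun hab => hne ((GEquiv σ hσσ).injective hab), Or.inl ⟨σ k, ?_⟩⟩
        show FreeGroup.map σ _ = FreeGroup.map σ a * _
        rw [map_mul, FreeGroup.map.of]
      · obtain ⟨k, rfl⟩ := h
        refine ⟨fun hab => hne ((GEquiv σ hσσ).injective hab), Or.inr ⟨σ k, ?_⟩⟩
        show FreeGroup.map σ _ = FreeGroup.map σ b * _
        rw [map_mul, FreeGroup.map.of]

lemma sigmaAut_toEquiv : (sigmaAut σ hσσ).toEquiv = GEquiv σ hσσ := rfl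

end GE

/-- left translation as a graph automorphism. -/
def transAut (h : V) : TreeAut where
  toEquiv := Equiv.mulLeft h
  map_rel_iff' := by
    intro a b
    simp only [treeGraph, SimpleGraph.fromRel_adj, Equiv.coe_mulLeft]
    constructor
    · rintro ⟨hne, hh | hh⟩
      · obtain ⟨k, hk⟩ := hh
        rw [mul_assoc] at hk
        exact ⟨fun hab => hne (by rw [hab]), Or.inl ⟨k, mul_left_cancel hk⟩⟩
      · obtain ⟨k, hk⟩ := hh
        rw [mul_assoc] at hk
        exact ⟨fun hab => hne (by rw [hab]), Or.inr ⟨k, mul_left_cancel hk⟩⟩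
    · rintro ⟨hne, hh | hh⟩
      · obtain ⟨k, rfl⟩ := hh
        exact ⟨fun hab => hne (mul_left_cancel hab), Or.inl ⟨k, (mul_assoc ..).symm⟩⟩
      · obtain ⟨k, rfl⟩ := hh
        exact ⟨fun hab => hne (mul_left_cancel hab), Or.inr ⟨k, (mul_assoc ..).symm⟩⟩

lemma transAut_toEquiv (h : V) : (transAut h).toEquiv = Equiv.mulLeft h := rfl


lemma lam_apply (g : V ≃ V) (x : lpT 2) (v : V) :
    (lam 2 g x : V → ℂ) v = (x : V → ℂ) (g.symm v) := rfl

lemma toReal_two : (2 : ℝ≥0∞).toReal = 2 := by simp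

lemma toReal_two_pos : (0:ℝ) < (2 : ℝ≥0∞).toReal := by simp

lemma lpT_norm_sq (y : lpT 2) : ‖y‖ ^ 2 = ∑' v, ‖(y : V → ℂ) v‖ ^ 2 := by
  have := lp.norm_rpow_eq_tsum toReal_two_pos y
  simp_rw [show ((2:ℝ≥0∞)).toReal = ((2:ℕ):ℝ) by simp, Real.rpow_natCast] at this
  exact this

lemma lpT_summable_sq (y : lpT 2) : Summable fun v => ‖(y : V → ℂ) v‖ ^ 2 := by
  have h := lp.memℓp y
  rw [memℓp_gen_iff toReal_two_pos] at h
  simp_rw [show ((2:ℝ≥0∞)).toReal = ((2:ℕ):ℝ) by simp, Real.rpow_natCast] at h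
  exact h

section KeyIneq

theorem key_ineq (G : Fin 3 → V ≃ V) (dwn : Fin 3 → V → Prop)
    (hGsymm : ∀ i, (G i).symm = G i)
    (hG1 : ∀ i, G i 1 = 1)
    (hflip : ∀ i v, v ≠ 1 → (dwn i (G i v) ↔ ¬ dwn i v))
    (huniq : ∀ i j v, dwn i v → dwn j v → i = j)
    (x : lpT 2) (hx : (x : V → ℂ) 1 = 0) :
    (1/3 : ℝ) * ‖x‖ ^ 2 ≤ ∑ i : Fin 3, ‖x - lam 2 (G i) x‖ ^ 2 := by
  classical
  set a : V → ℝ := fun v => ‖(x : V → ℂ) v‖ with ha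
  have ha0 : ∀ v, 0 ≤ a v := fun v => norm_nonneg _
  have ha1 : a 1 = 0 := by simp [ha, hx]
  have hS : Summable fun v => a v ^ 2 := lpT_summable_sq x
  have hSG : ∀ i, Summable fun v => a (G i v) ^ 2 := by
    intro i
    simpa [Function.comp_def] using ((G i).summable_iff (f := fun v => a v ^ 2)).2 hS
  have htG : ∀ i, ∑' v, a (G i v) ^ 2 = ∑' v, a v ^ 2 := by
    intro i
    simpa using (G i).tsum_eq (fun v => a v ^ 2)
  have hSc : ∀ i, Summable fun v => a v * a (G i v) := by
    intro i
    refine Summable.of_nonneg_of_le (fun v => mul_nonneg (ha0 v) (ha0 _)) (fun v => ?_)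
      (hS.add (hSG i))
    nlinarith [sq_nonneg (a v - a (G i v)), ha0 v, ha0 (G i v)]
  set ρ : Fin 3 → V → ℝ := fun i v => if dwn i v then 3/2 else 2/3 with hρ
  have hρpos : ∀ i v, 0 < ρ i v := by
    intro i v; by_cases h : dwn i v <;> simp [hρ, h] <;> norm_num
  have hρle : ∀ i v, ρ i v ≤ 3/2 := by
    intro i v; by_cases h : dwn i v <;> simp [hρ, h] <;> norm_num
  have hρinvle : ∀ i v, (ρ i v)⁻¹ ≤ 3/2 := by
    intro i v; by_cases h : dwn i v <;> simp [hρ, h] <;> norm_num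
  have hρflipv : ∀ i v, v ≠ 1 → ρ i (G i v) = (ρ i v)⁻¹ := by
    intro i v hv
    by_cases h : dwn i v
    · have h2 : ¬ dwn i (G i v) := fun hcon => ((hflip i v hv).1 hcon) h
      simp [hρ, h, h2]
    · have h2 : dwn i (G i v) := (hflip i v hv).2 h
      simp [hρ, h, h2]
  have hpoint : ∀ i v, 2 * (a v * a (G i v)) ≤ ρ i v * a v ^ 2 + (ρ i v)⁻¹ * a (G i v) ^ 2 := by
    intro i v
    by_cases h : dwn i v
    · have hh : ρ i v = 3/2 := by simp [hρ, h]
      rw [hh]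
      nlinarith [sq_nonneg (3 * a v - 2 * a (G i v))]
    · have hh : ρ i v = 2/3 := by simp [hρ, h]
      rw [hh]
      nlinarith [sq_nonneg (2 * a v - 3 * a (G i v))]
  have hSρ : ∀ i, Summable fun v => ρ i v * a v ^ 2 := by
    intro i
    refine Summable.of_nonneg_of_le
      (fun v => mul_nonneg (hρpos i v).le (sq_nonneg _)) (fun v => ?_) (hS.mul_left (3/2))
    exact mul_le_mul_of_nonneg_right (hρle i v) (sq_nonneg _)
  have hSρ' : ∀ i, Summable fun v => (ρ i v)⁻¹ * a (G i v) ^ 2 := by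
    intro i
    refine Summable.of_nonneg_of_le
      (fun v => mul_nonneg (by positivity) (sq_nonneg _)) (fun v => ?_) ((hSG i).mul_left (3/2))
    exact mul_le_mul_of_nonneg_right (hρinvle i v) (sq_nonneg _)
  have hreidx : ∀ i, ∑' v, (ρ i v)⁻¹ * a (G i v) ^ 2 = ∑' v, ρ i v * a v ^ 2 := by
    intro i
    have hfun : ∀ v, (ρ i v)⁻¹ * a (G i v) ^ 2 = ρ i (G i v) * a (G i v) ^ 2 := by
      intro v
      by_cases hv : v = 1
      · subst hv
        rw [hG1 i]
        simp [ha1]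
      · rw [hρflipv i v hv]
    calc ∑' v, (ρ i v)⁻¹ * a (G i v) ^ 2 = ∑' v, ρ i (G i v) * a (G i v) ^ 2 :=
          tsum_congr hfun
      _ = ∑' v, ρ i v * a v ^ 2 := by
          simpa using (G i).tsum_eq (fun v => ρ i v * a v ^ 2)
  have hc_bound : ∀ i, ∑' v, a v * a (G i v) ≤ ∑' v, ρ i v * a v ^ 2 := by
    intro i
    have h1 : ∑' v, 2 * (a v * a (G i v)) ≤ ∑' v, (ρ i v * a v ^ 2 + (ρ i v)⁻¹ * a (G i v) ^ 2) :=
      Summable.tsum_le_tsum (hpoint i) ((hSc i).mul_left 2) ((hSρ i).add (hSρ' i))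
    rw [tsum_mul_left, Summable.tsum_add (hSρ i) (hSρ' i), hreidx i] at h1
    linarith
  have hrow : ∀ v, ρ 0 v + ρ 1 v + ρ 2 v ≤ 17/6 := by
    intro v
    by_cases h0 : dwn 0 v
    · have h1 : ¬ dwn 1 v := fun h => by simpa using huniq 0 1 v h0 h
      have h2 : ¬ dwn 2 v := fun h => by simpa using huniq 0 2 v h0 h
      simp [hρ, h0, h1, h2]; norm_num
    · by_cases h1 : dwn 1 v
      · have h2 : ¬ dwn 2 v := fun h => by simpa using huniq 1 2 v h1 h
        simp [hρ, h0, h1, h2]; norm_num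
      · by_cases h2 : dwn 2 v
        · simp [hρ, h0, h1, h2]; norm_num
        · simp [hρ, h0, h1, h2]; norm_num
  have hcomb : ∑' v, ρ 0 v * a v ^ 2 + ∑' v, ρ 1 v * a v ^ 2 + ∑' v, ρ 2 v * a v ^ 2
      ≤ (17/6) * ∑' v, a v ^ 2 := by
    rw [← Summable.tsum_add (hSρ 0) (hSρ 1), ← Summable.tsum_add ((hSρ 0).add (hSρ 1)) (hSρ 2), ← tsum_mul_left]
    refine Summable.tsum_le_tsum (fun v => ?_) (((hSρ 0).add (hSρ 1)).add (hSρ 2)) (hS.mul_left (17/6))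
    have := hrow v
    nlinarith [sq_nonneg (a v)]
  have hnorm_i : ∀ i, 2 * (∑' v, a v ^ 2) - 2 * (∑' v, a v * a (G i v))
      ≤ ‖x - lam 2 (G i) x‖ ^ 2 := by
    intro i
    have hcoords : ∀ v, ((x - lam 2 (G i) x : lpT 2) : V → ℂ) v
        = (x : V → ℂ) v - (x : V → ℂ) (G i v) := by
      intro v
      rw [lp.coeFn_sub, Pi.sub_apply, lam_apply, hGsymm i]
    have hSd : Summable fun v => (a v - a (G i v)) ^ 2 := by
      have : (fun v => (a v - a (G i v)) ^ 2)
          = fun v => (a v ^ 2 + a (G i v) ^ 2) - 2 * (a v * a (G i v)) := by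
        funext v; ring
      rw [this]
      exact (hS.add (hSG i)).sub ((hSc i).mul_left 2)
    have hSy : Summable fun v => ‖(x : V → ℂ) v - (x : V → ℂ) (G i v)‖ ^ 2 := by
      have := lpT_summable_sq (x - lam 2 (G i) x)
      simpa [hcoords] using this
    have h1 : ∑' v, (a v - a (G i v)) ^ 2
        ≤ ∑' v, ‖(x : V → ℂ) v - (x : V → ℂ) (G i v)‖ ^ 2 := by
      refine Summable.tsum_le_tsum (fun v => ?_) hSd hSy
      have habs : |a v - a (G i v)| ≤ ‖(x : V → ℂ) v - (x : V → ℂ) (G i v)‖ :=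
        abs_norm_sub_norm_le _ _
      calc (a v - a (G i v)) ^ 2 = |a v - a (G i v)| ^ 2 := (sq_abs _).symm
        _ ≤ ‖(x : V → ℂ) v - (x : V → ℂ) (G i v)‖ ^ 2 :=
            pow_le_pow_left₀ (abs_nonneg _) habs 2
    have h2 : ∑' v, (a v - a (G i v)) ^ 2
        = 2 * (∑' v, a v ^ 2) - 2 * (∑' v, a v * a (G i v)) := by
      have hfun : (fun v => (a v - a (G i v)) ^ 2)
          = fun v => (a v ^ 2 + a (G i v) ^ 2) - 2 * (a v * a (G i v)) := by
        funext v; ring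
      rw [hfun, Summable.tsum_sub (hS.add (hSG i)) ((hSc i).mul_left 2),
        Summable.tsum_add hS (hSG i), htG i, tsum_mul_left]
      ring
    have h3 : ‖x - lam 2 (G i) x‖ ^ 2 = ∑' v, ‖(x : V → ℂ) v - (x : V → ℂ) (G i v)‖ ^ 2 := by
      rw [lpT_norm_sq]
      exact tsum_congr fun v => by rw [hcoords v]
    rw [h2, ← h3] at h1
    exact h1
  rw [Fin.sum_univ_three]
  have hx2 : ‖x‖ ^ 2 = ∑' v, a v ^ 2 := lpT_norm_sq x
  have e0 := hnorm_i 0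
  have e1 := hnorm_i 1
  have e2 := hnorm_i 2
  have c0 := hc_bound 0
  have c1 := hc_bound 1
  have c2 := hc_bound 2
  rw [hx2]
  linarith [hcomb]


end KeyIneq

lemma lam_norm (g : V ≃ V) (x : lpT 2) : ‖lam 2 g x‖ = ‖x‖ := by
  rw [lp.norm_eq_tsum_rpow toReal_two_pos, lp.norm_eq_tsum_rpow toReal_two_pos]
  congr 1
  have : ∀ v, ‖(lam 2 g x : V → ℂ) v‖ ^ (2:ℝ≥0∞).toReal
      = (fun w => ‖(x : V → ℂ) w‖ ^ (2:ℝ≥0∞).toReal) (g.symm v) := fun v => rfl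
  rw [tsum_congr this, g.symm.tsum_eq (fun w => ‖(x : V → ℂ) w‖ ^ (2:ℝ≥0∞).toReal)]

lemma lam_invol (g : V ≃ V) (hg : g.symm = g) (x : lpT 2) :
    lam 2 g (lam 2 g x) = x := by
  have hgg : ∀ w, g (g w) = w := fun w => by
    nth_rewrite 1 [← hg]
    exact g.symm_apply_apply w
  apply lp.ext
  funext v
  show (x : V → ℂ) (g.symm (g.symm v)) = (x : V → ℂ) v
  rw [hg]
  exact congrArg (x : V → ℂ) (hgg v)

/-- `lam` as a linear isometry equivalence, for an involutive `g`. -/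
def UIso (g : V ≃ V) (hg : g.symm = g) : lpT 2 ≃ₗᵢ[ℂ] lpT 2 where
  toLinearMap := lam 2 g
  invFun := lam 2 g
  left_inv z := lam_invol g hg z
  right_inv z := lam_invol g hg z
  norm_map' z := lam_norm g z

/-- evaluation at the root, as a continuous linear functional on `ℓ₂(T)`. -/
def ev1 : lpT 2 →L[ℂ] ℂ :=
  LinearMap.mkContinuous
    { toFun := fun y => (y : V → ℂ) 1
      map_add' := fun y z => by
        change ((y + z : lpT 2) : V → ℂ) 1 = (y : V → ℂ) 1 + (z : V → ℂ) 1
        rw [lp.coeFn_add]; rfl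
      map_smul' := fun c y => by
        change ((c • y : lpT 2) : V → ℂ) 1 = (RingHom.id ℂ) c • (y : V → ℂ) 1
        rw [lp.coeFn_smul]; rfl }
    1 (fun y => by
      simpa using lp.norm_apply_le_norm (by norm_num : (2:ℝ≥0∞) ≠ 0) y 1)

lemma ev1_apply (y : lpT 2) : ev1 y = (y : V → ℂ) 1 := rfl

set_option maxHeartbeats 1000000 in
set_option maxHeartbeats 1000000 in
theorem decomp (G : Fin 3 → V ≃ V) (dwn : Fin 3 → V → Prop)
    (hGsymm : ∀ i, (G i).symm = G i)
    (hG1 : ∀ i, G i 1 = 1)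
    (hflip : ∀ i v, v ≠ 1 → (dwn i (G i v) ↔ ¬ dwn i v))
    (huniq : ∀ i j v, dwn i v → dwn j v → i = j)
    (x : lpT 2) (hx : (x : V → ℂ) 1 = 0) :
    ∃ z : lpT 2, (z : V → ℂ) 1 = 0 ∧
      x = (2:ℂ) • ((z - lam 2 (G 0) z) + ((z - lam 2 (G 1) z) + (z - lam 2 (G 2) z))) := by
  classical
  let U : Fin 3 → (lpT 2 ≃ₗᵢ[ℂ] lpT 2) := fun i => UIso (G i) (hGsymm i)
  let Ucl : Fin 3 → (lpT 2 →L[ℂ] lpT 2) := fun i => (U i).toLinearIsometry.toContinuousLinearMap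
  have hUcl : ∀ i (z : lpT 2), Ucl i z = lam 2 (G i) z := fun i z => rfl
  let T : lpT 2 →L[ℂ] lpT 2 := (2:ℂ) • ((1 - Ucl 0) + ((1 - Ucl 1) + (1 - Ucl 2)))
  have hTz : ∀ z : lpT 2,
      T z = (2:ℂ) • ((z - lam 2 (G 0) z) + ((z - lam 2 (G 1) z) + (z - lam 2 (G 2) z))) := by
    intro z
    simp only [T, ContinuousLinearMap.smul_apply, ContinuousLinearMap.add_apply,
      ContinuousLinearMap.sub_apply, ContinuousLinearMap.one_apply, hUcl]
  -- the coordinate of T z at the root vanishes when z's does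
  have hT1 : ∀ z : lpT 2, (z : V → ℂ) 1 = 0 → ((T z : lpT 2) : V → ℂ) 1 = 0 := by
    intro z hz
    rw [hTz z, lp.coeFn_smul, Pi.smul_apply, lp.coeFn_add, Pi.add_apply, lp.coeFn_add,
      Pi.add_apply, lp.coeFn_sub, lp.coeFn_sub, lp.coeFn_sub, Pi.sub_apply, Pi.sub_apply,
      Pi.sub_apply, lam_apply, lam_apply, lam_apply, hGsymm 0, hGsymm 1, hGsymm 2,
      hG1 0, hG1 1, hG1 2, hz]
    simp
  -- re ⟪T z, z⟫ equals the sum of the three square norms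
  have h2w : ∀ w : ℂ, RCLike.re ((2:ℂ) * w) = 2 * RCLike.re w := by
    intro w
    rw [two_mul, map_add, two_mul]
  have hone : ∀ (i : Fin 3) (z : lpT 2),
      2 * RCLike.re (inner ℂ (z - Ucl i z) z : ℂ) = ‖z - Ucl i z‖ ^ 2 := by
    intro i z
    have hnormU : ‖Ucl i z‖ = ‖z‖ := (U i).norm_map z
    have hsq := @norm_sub_sq ℂ _ _ _ _ z (Ucl i z)
    have hsub : (inner ℂ (z - Ucl i z) z : ℂ) = (inner ℂ z z : ℂ) - (inner ℂ (Ucl i z) z : ℂ) :=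
      inner_sub_left _ _ _
    have hself : RCLike.re (inner ℂ z z : ℂ) = ‖z‖ ^ 2 := inner_self_eq_norm_sq z
    have hresymm : RCLike.re (inner ℂ z (Ucl i z) : ℂ) = RCLike.re (inner ℂ (Ucl i z) z : ℂ) :=
      inner_re_symm _ _
    rw [hsub, map_sub]
    rw [hnormU] at hsq
    linarith [hsq, hself, hresymm]
  have hTinner : ∀ z : lpT 2, RCLike.re (inner ℂ (T z) z : ℂ)
      = ‖z - Ucl 0 z‖ ^ 2 + ‖z - Ucl 1 z‖ ^ 2 + ‖z - Ucl 2 z‖ ^ 2 := by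
    intro z
    have hTz' : T z = (2:ℂ) • ((z - Ucl 0 z) + ((z - Ucl 1 z) + (z - Ucl 2 z))) := by
      rw [hTz z]; rfl
    rw [hTz', inner_smul_left, Complex.conj_ofNat 2, h2w,
      inner_add_left, inner_add_left, map_add, map_add]
    have h0 := hone 0 z
    have h1 := hone 1 z
    have h2 := hone 2 z
    linarith
  -- coercivity
  have hcoercive : ∀ z : lpT 2, (z : V → ℂ) 1 = 0 →
      (1/3 : ℝ) * ‖z‖ ^ 2 ≤ RCLike.re (inner ℂ (T z) z : ℂ) := by
    intro z hz
    have := key_ineq G dwn hGsymm hG1 hflip huniq z hz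
    rw [Fin.sum_univ_three] at this
    rw [hTinner z]
    simpa only [hUcl] using this
  -- the kernel of ev1
  let K : Submodule ℂ (lpT 2) := LinearMap.ker (ev1 : lpT 2 →ₗ[ℂ] ℂ)
  have hKmem : ∀ y : lpT 2, y ∈ K ↔ (y : V → ℂ) 1 = 0 := by
    intro y
    constructor
    · intro h; exact h
    · intro h; exact h
  have hKclosed : IsClosed (K : Set (lpT 2)) := ContinuousLinearMap.isClosed_ker ev1
  haveI : CompleteSpace K := hKclosed.completeSpace_coe
  let T' : K →L[ℂ] K := (T.comp K.subtypeL).codRestrict K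
    (fun y => (hKmem _).2 (hT1 _ ((hKmem _).1 y.2)))
  have hT'coe : ∀ y : K, (T' y : lpT 2) = T (y : lpT 2) := fun y => rfl
  -- lower bound
  have hlow : ∀ y : K, ‖y‖ ≤ 3 * ‖T' y‖ := by
    intro y
    have hco := hcoercive (y : lpT 2) ((hKmem _).1 y.2)
    have hre : RCLike.re (inner ℂ (T (y : lpT 2)) (y : lpT 2) : ℂ)
        ≤ ‖T (y : lpT 2)‖ * ‖(y : lpT 2)‖ := re_inner_le_norm _ _
    have hn1 : ‖y‖ = ‖(y : lpT 2)‖ := rfl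
    have hn2 : ‖T' y‖ = ‖T (y : lpT 2)‖ := by rw [← hT'coe y]; rfl
    rw [hn1, hn2]
    by_cases h : ‖(y : lpT 2)‖ = 0
    · rw [h]; positivity
    · have hpos : 0 < ‖(y : lpT 2)‖ := lt_of_le_of_ne (norm_nonneg _) (Ne.symm h)
      nlinarith [norm_nonneg (T (y : lpT 2))]
  -- surjectivity of T'
  have hanti : AntilipschitzWith 3 T' := by
    refine ContinuousLinearMap.antilipschitz_of_bound T' (K := 3) ?_
    intro y
    simpa using hlow y
  have hclosedrange : IsClosed (Set.range T') := hanti.isClosed_range T'.uniformContinuous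
  have hrangeset : ((LinearMap.range (T' : K →ₗ[ℂ] K) : Submodule ℂ K) : Set K) = Set.range T' := by
    exact LinearMap.coe_range _
  haveI : CompleteSpace (LinearMap.range (T' : K →ₗ[ℂ] K) : Submodule ℂ K) := by
    rw [← hrangeset] at hclosedrange
    exact hclosedrange.completeSpace_coe
  have horth : (LinearMap.range (T' : K →ₗ[ℂ] K) : Submodule ℂ K)ᗮ = ⊥ := by
    rw [Submodule.eq_bot_iff]
    intro y hy
    have h0 : (inner ℂ (T' y) y : ℂ) = 0 :=
      (Submodule.mem_orthogonal _ y).1 hy (T' y) ⟨y, rfl⟩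
    have hco := hcoercive (y : lpT 2) ((hKmem _).1 y.2)
    have hinner_eq : (inner ℂ (T' y) y : ℂ) = (inner ℂ (T (y : lpT 2)) (y : lpT 2) : ℂ) := rfl
    rw [hinner_eq] at h0
    rw [h0] at hco
    simp only [map_zero] at hco
    have : ‖(y : lpT 2)‖ = 0 := by
      have hn := sq_nonneg ‖(y : lpT 2)‖
      nlinarith [norm_nonneg (y : lpT 2)]
    exact Subtype.ext (by simpa using norm_eq_zero.mp this)
  have hrange_top : (LinearMap.range (T' : K →ₗ[ℂ] K) : Submodule ℂ K) = ⊤ :=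
    Submodule.orthogonal_eq_bot_iff.1 horth
  -- conclude
  have hxK : x ∈ K := (hKmem x).2 hx
  have hmem : (⟨x, hxK⟩ : K) ∈ (LinearMap.range (T' : K →ₗ[ℂ] K) : Submodule ℂ K) := by
    rw [hrange_top]; trivial
  obtain ⟨z, hz⟩ := hmem
  refine ⟨(z : lpT 2), (hKmem _).1 z.2, ?_⟩
  have : T (z : lpT 2) = x := by
    have := congrArg (fun (w : K) => (w : lpT 2)) hz
    simpa [hT'coe] using this
  rw [← this, hTz]


/-! ### The concrete involutive automorphisms and the orientation -/

def GG (i : Fin 3) : V ≃ V := GEquiv (sigmaPerm i) (sigmaPerm_sigmaPerm i)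

lemma GG_symm (i : Fin 3) : (GG i).symm = GG i := rfl

lemma GG_one (i : Fin 3) : GG i 1 = 1 := GEquiv_one _ _

lemma GG_apply (i : Fin 3) (v : V) : GG i v = FreeGroup.map (sigmaPerm i) v := rfl

def fidx (v : V) : ℕ := v.toWord.headI.1

def dwn (i : Fin 3) (v : V) : Prop := v ≠ 1 ∧ Odd (runlen i (ee (fidx v)))

lemma fidx_GG {v : V} (hv : v ≠ 1) (i : Fin 3) : fidx (GG i v) = sigmaPerm i (fidx v) := by
  have hw : v.toWord ≠ [] := fun h => hv (FreeGroup.toWord_eq_nil_iff.1 h)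
  rw [GG_apply]
  unfold fidx
  rw [toWord_map]
  cases hcase : v.toWord with
  | nil => exact absurd hcase hw
  | cons p t => simp [hcase]

lemma ee_sigma (i : Fin 3) (n : ℕ) : ee (sigmaPerm i n) = tau i (ee n) := by
  simp [sigmaPerm]

lemma dwn_flip : ∀ (i : Fin 3) (v : V), v ≠ 1 → (dwn i (GG i v) ↔ ¬ dwn i v) := by
  intro i v hv
  have h1 : GG i v ≠ 1 := GEquiv_ne_one _ _ hv
  simp only [dwn, hv, h1, ne_eq, not_false_eq_true, true_and]
  rw [fidx_GG hv i, ee_sigma, odd_tau]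

lemma dwn_uniq : ∀ (i j : Fin 3) (v : V), dwn i v → dwn j v → i = j := by
  rintro i j v ⟨_, hi⟩ ⟨_, hj⟩
  exact odd_unique hi hj

end TreeRig

/-- Rigidity: if `A : ℓ₂(T) → ℂ^T` is any linear operator (not assumed bounded) with
`d(g) = Aλ(g) − λ(g)A` for all `g ∈ Aut(T)`, then `A = L* + ϑ·Id` for some `ϑ ∈ ℂ`. -/
theorem dtree_implementing_operator_unique
    (A : lpT 2 →ₗ[ℂ] (V → ℂ))
    (hA : ∀ g : TreeAut, ∀ x : lpT 2,
      dtree g.toEquiv (x : V → ℂ) = A (lam 2 g.toEquiv x) - lamFull g.toEquiv (A x)) :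
    ∃ ϑ : ℂ, ∀ x : lpT 2, A x = Lstar (x : V → ℂ) + ϑ • (x : V → ℂ) := by
  classical
  open TreeRig in
  -- `B = A - L*` intertwines all `λ(g)`
  let coeL : lpT 2 →ₗ[ℂ] (V → ℂ) :=
    { toFun := fun x => (x : V → ℂ)
      map_add' := fun x y => lp.coeFn_add x y
      map_smul' := fun c x => lp.coeFn_smul c x }
  let B : lpT 2 →ₗ[ℂ] (V → ℂ) := A - Lstar ∘ₗ coeL
  have hBdef : ∀ x : lpT 2, B x = A x - Lstar (x : V → ℂ) := fun x => rfl
  have hB : ∀ (g : TreeAut) (x : lpT 2),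
      B (lam 2 g.toEquiv x) = lamFull g.toEquiv (B x) := by
    intro g x
    funext v
    have hv : Lstar (lamFull g.toEquiv (x : V → ℂ)) v
          - lamFull g.toEquiv (Lstar (x : V → ℂ)) v
        = A (lam 2 g.toEquiv x) v - lamFull g.toEquiv (A x) v :=
      congrFun (hA g x) v
    show A (lam 2 g.toEquiv x) v - Lstar (lamFull g.toEquiv (x : V → ℂ)) v
        = lamFull g.toEquiv (A x - Lstar (x : V → ℂ)) v
    have hrhs : lamFull g.toEquiv (A x - Lstar (x : V → ℂ)) v
        = lamFull g.toEquiv (A x) v - lamFull g.toEquiv (Lstar (x : V → ℂ)) v := rfl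
    rw [hrhs]
    linear_combination -hv
  -- vanishing of `(B x)(e)` when `x(e) = 0`
  have hvan : ∀ x : lpT 2, (x : V → ℂ) 1 = 0 → B x 1 = 0 := by
    intro x hx
    obtain ⟨z, hz1, hzx⟩ :=
      TreeRig.decomp TreeRig.GG TreeRig.dwn TreeRig.GG_symm TreeRig.GG_one
        TreeRig.dwn_flip TreeRig.dwn_uniq x hx
    have hterm : ∀ i : Fin 3, B (lam 2 (TreeRig.GG i) z) 1 = B z 1 := by
      intro i
      have hgg := hB (TreeRig.sigmaAut (TreeRig.sigmaPerm i)
        (TreeRig.sigmaPerm_sigmaPerm i)) z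
      rw [show (TreeRig.sigmaAut (TreeRig.sigmaPerm i)
        (TreeRig.sigmaPerm_sigmaPerm i)).toEquiv = TreeRig.GG i from rfl] at hgg
      rw [hgg]
      show (B z) ((TreeRig.GG i).symm 1) = B z 1
      rw [TreeRig.GG_symm i, TreeRig.GG_one i]
    rw [hzx, map_smul, map_add, map_add, map_sub, map_sub, map_sub]
    simp only [Pi.smul_apply, Pi.add_apply, Pi.sub_apply, smul_eq_mul]
    rw [hterm 0, hterm 1, hterm 2]
    ring
  -- the scalar
  set e1 : lpT 2 := lp.single 2 (1 : V) (1 : ℂ) with he1def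
  have he1 : ((e1 : lpT 2) : V → ℂ) 1 = 1 := by
    rw [he1def]
    exact lp.single_apply_self (E := fun _ : V => ℂ) 2 (1 : V) (1 : ℂ)
  set θ : ℂ := B e1 1 with hθdef
  have hBval : ∀ x : lpT 2, B x 1 = θ * (x : V → ℂ) 1 := by
    intro x
    have h := hvan (x - ((x : V → ℂ) 1) • e1) (by
      rw [lp.coeFn_sub, Pi.sub_apply, lp.coeFn_smul, Pi.smul_apply, he1, smul_eq_mul, mul_one,
        sub_self])
    rw [map_sub, map_smul] at h
    simp only [Pi.sub_apply, Pi.smul_apply, smul_eq_mul] at h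
    linear_combination h
  have hBall : ∀ (x : lpT 2) (u : V), B x u = θ * (x : V → ℂ) u := by
    intro x u
    have hg := hB (TreeRig.transAut u) (lam 2 (Equiv.mulLeft u).symm x)
    rw [show (TreeRig.transAut u).toEquiv = Equiv.mulLeft u from rfl] at hg
    have hxx : lam 2 (Equiv.mulLeft u) (lam 2 (Equiv.mulLeft u).symm x) = x := by
      apply lp.ext
      funext w
      show (x : V → ℂ) ((Equiv.mulLeft u).symm.symm ((Equiv.mulLeft u).symm w)) = (x : V → ℂ) w
      rw [Equiv.symm_symm, Equiv.apply_symm_apply]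
    rw [hxx] at hg
    have hgu := congrFun hg u
    have hlamval : lamFull (Equiv.mulLeft u) (B (lam 2 (Equiv.mulLeft u).symm x)) u
        = B (lam 2 (Equiv.mulLeft u).symm x) 1 := by
      show B (lam 2 (Equiv.mulLeft u).symm x) ((Equiv.mulLeft u).symm u) = _
      rw [Equiv.mulLeft_symm]
      norm_num
    rw [hlamval] at hgu
    rw [hgu, hBval]
    congr 1
    show (x : V → ℂ) ((Equiv.mulLeft u).symm.symm 1) = (x : V → ℂ) u
    rw [Equiv.symm_symm]
    show (x : V → ℂ) (u * 1) = (x : V → ℂ) u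
    rw [mul_one]
  refine ⟨θ, fun x => ?_⟩
  funext u
  have h := hBall x u
  have hBu : B x u = A x u - Lstar (x : V → ℂ) u := rfl
  rw [hBu] at h
  show A x u = (Lstar (x : V → ℂ)) u + (θ • (x : V → ℂ)) u
  rw [Pi.smul_apply, smul_eq_mul]
  linear_combination h
end
end

section
/- The derivation d(g) = L*λ(g) − λ(g)L* of Aut(T) on ℓ₂(T) is not inner: there is no bounded operator A ∈ B(ℓ₂(T)) with d(g) = Aλ(g) − λ(g)A for all g ∈ Aut(T). -/
open scoped ENNReal

noncomputable section

attribute [local instance] Classical.propDecidable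

namespace DtreeNotInner

lemma reduce_map (e : ℕ ≃ ℕ) (L : List (ℕ × Bool)) :
    FreeGroup.reduce (L.map (fun p => (e p.1, p.2))) =
      (FreeGroup.reduce L).map (fun p => (e p.1, p.2)) := by
  induction L with
  | nil => rfl
  | cons x L ih =>
    rw [List.map_cons, FreeGroup.reduce.cons, FreeGroup.reduce.cons, ih]
    cases h : FreeGroup.reduce L with
    | nil => rfl
    | cons hd tl =>
      simp only [List.map_cons]
      by_cases hc : x.1 = hd.1 ∧ x.2 = !hd.2
      · rw [if_pos ⟨congrArg e hc.1, hc.2⟩, if_pos hc]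
      · rw [if_neg (fun hh => hc ⟨e.injective hh.1, hh.2⟩), if_neg hc, List.map_cons,
          List.map_cons]

lemma toWord_congr (e : ℕ ≃ ℕ) (x : V) :
    (FreeGroup.freeGroupCongr e x).toWord = x.toWord.map (fun p => (e p.1, p.2)) := by
  conv_lhs => rw [show (FreeGroup.freeGroupCongr e x) = FreeGroup.map e x from rfl,
    ← FreeGroup.mk_toWord (x := x), FreeGroup.map.mk, FreeGroup.toWord_mk, reduce_map,
    FreeGroup.reduce_toWord]

lemma parent_congr (e : ℕ ≃ ℕ) (v : V) :
    parent (FreeGroup.freeGroupCongr e v) = FreeGroup.freeGroupCongr e (parent v) := by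
  show FreeGroup.mk _ = FreeGroup.map e (FreeGroup.mk _)
  rw [toWord_congr, FreeGroup.map.mk, List.map_dropLast]

lemma parent_inv_of (i : ℕ) : parent (FreeGroup.of i)⁻¹ = root := by
  show FreeGroup.mk _ = _
  rw [FreeGroup.toWord_inv, FreeGroup.toWord_of]
  show FreeGroup.mk ((FreeGroup.invRev [(i, true)]).dropLast) = root
  simp [FreeGroup.invRev, root, FreeGroup.one_eq_mk]

lemma inv_of_ne_root (i : ℕ) : (FreeGroup.of i)⁻¹ ≠ root := by
  simp [root, FreeGroup.of_ne_one]

lemma dtree_apply (g : V ≃ V) (x : V → ℂ) (v : V) :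
    dtree g x v = (if v = root then 0 else x (g.symm (parent v)))
      - (if g.symm v = root then 0 else x (parent (g.symm v))) := rfl

/-- The automorphism of the tree given by left translation. -/
def transAut (a : V) : TreeAut :=
  ⟨Equiv.mulLeft a, by
    intro s t
    simp only [treeGraph, SimpleGraph.fromRel_adj, Equiv.coe_mulLeft, ne_eq, mul_right_inj,
      mul_assoc]⟩

/-- The automorphism of the tree given by a permutation of the free generators. -/
def permAut (e : ℕ ≃ ℕ) : TreeAut :=
  ⟨(FreeGroup.freeGroupCongr e).toEquiv, by
    intro s t
    have key : ∀ (e : ℕ ≃ ℕ) (s t : V), (∃ i : ℕ, t = s * FreeGroup.of i) →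
        ∃ i : ℕ, FreeGroup.freeGroupCongr e t = FreeGroup.freeGroupCongr e s * FreeGroup.of i := by
      rintro e s t ⟨i, rfl⟩
      exact ⟨e i, by simp⟩
    simp only [treeGraph, SimpleGraph.fromRel_adj, MulEquiv.toEquiv_eq_coe,
      EquivLike.coe_coe, ne_eq, EmbeddingLike.apply_eq_iff_eq]
    constructor
    · rintro ⟨h1, h2⟩
      refine ⟨h1, ?_⟩
      have hsymm : ∀ x : V, FreeGroup.freeGroupCongr e.symm (FreeGroup.freeGroupCongr e x) = x :=
        fun x => by rw [← FreeGroup.freeGroupCongr_symm]; exact MulEquiv.symm_apply_apply _ _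
      rcases h2 with h2 | h2
      · left
        obtain ⟨i, hi⟩ := key e.symm _ _ h2
        rw [hsymm, hsymm] at hi
        exact ⟨i, hi⟩
      · right
        obtain ⟨i, hi⟩ := key e.symm _ _ h2
        rw [hsymm, hsymm] at hi
        exact ⟨i, hi⟩
    · rintro ⟨h1, h2⟩
      exact ⟨h1, h2.imp (key e s t) (key e t s)⟩⟩

lemma single_apply (t v : V) : (lp.single 2 t (1:ℂ) : lpT 2) v = if v = t then 1 else 0 := by
  rcases eq_or_ne v t with rfl | h
  · simp [lp.single_apply_self]
  · simp [lp.single_apply_ne _ _ _ h, h]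

lemma lam_single (g : V ≃ V) (t : V) :
    lam 2 g (lp.single 2 t (1:ℂ)) = lp.single 2 (g t) 1 := by
  apply Subtype.ext
  funext v
  show (lp.single 2 t (1:ℂ) : lpT 2) (g.symm v) = (lp.single 2 (g t) (1:ℂ) : lpT 2) v
  rw [single_apply, single_apply]
  by_cases h : v = g t
  · rw [if_pos h, if_pos (by rw [h]; exact g.symm_apply_apply t)]
  · rw [if_neg h, if_neg (fun hc => h (by rw [← hc]; exact (g.apply_symm_apply v).symm))]

/-- If an `ℓ₂` function takes the same value on infinitely many points, that value is `0`. -/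
lemma const_eq_zero (y : lpT 2) (s : ℕ → V) (hs : Function.Injective s) (c : ℂ)
    (h : ∀ i, (y : V → ℂ) (s i) = c) : c = 0 := by
  have hp : 0 < (2 : ℝ≥0∞).toReal := by norm_num
  have hsum : Summable (fun v : V => ‖(y : V → ℂ) v‖ ^ (2 : ℝ≥0∞).toReal) :=
    (memℓp_gen_iff hp).1 (lp.memℓp y)
  have h2 : Summable (fun _ : ℕ => ‖c‖ ^ (2 : ℝ≥0∞).toReal) := by
    have := hsum.comp_injective hs
    simpa [Function.comp_def, h] using this
  have h3 : ‖c‖ ^ (2 : ℝ≥0∞).toReal = 0 := (summable_const_iff _).1 h2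
  have h4 : ‖c‖ = 0 := (Real.rpow_eq_zero (norm_nonneg c) (by norm_num)).1 h3
  simpa using h4

lemma adjoint_apply (A : lpT 2 →L[ℂ] lpT 2) (y : lpT 2) (t : V) :
    (ContinuousLinearMap.adjoint A y : V → ℂ) t
      = starRingEnd ℂ (inner ℂ y (A (lp.single 2 t 1)) : ℂ) := by
  have h1 : (inner ℂ (ContinuousLinearMap.adjoint A y) (lp.single 2 t (1:ℂ)) : ℂ)
      = inner ℂ y (A (lp.single 2 t 1)) :=
    ContinuousLinearMap.adjoint_inner_left A _ _
  have h2 : (inner ℂ (ContinuousLinearMap.adjoint A y) (lp.single 2 t (1:ℂ)) : ℂ)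
      = starRingEnd ℂ ((ContinuousLinearMap.adjoint A y : V → ℂ) t) := by
    rw [lp.inner_single_right]
    simp [inner]
  rw [h2] at h1
  rw [← h1]
  simp

end DtreeNotInner

open DtreeNotInner

/-- The derivation `d(g) = L*λ(g) − λ(g)L*` of `Aut(T)` on `ℓ₂(T)` is not inner:
no bounded operator `A ∈ B(ℓ₂(T))` satisfies `d(g) = Aλ(g) − λ(g)A` for all
`g ∈ Aut(T)`. -/
theorem dtree_not_inner :
    ¬ ∃ A : lpT 2 →L[ℂ] lpT 2, ∀ g : TreeAut, ∀ x : lpT 2,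
      dtree g.toEquiv (x : V → ℂ)
        = ((A (lam 2 g.toEquiv x) : lpT 2) : V → ℂ)
          - lamFull g.toEquiv ((A x : lpT 2) : V → ℂ) := by
  rintro ⟨A, hA⟩
  classical
  set δ : V → lpT 2 := fun t => lp.single 2 t 1 with hδdef
  -- the symm of a permutation automorphism acts as `freeGroupCongr e.symm`
  have hpsymm : ∀ (e : ℕ ≃ ℕ) (v : V),
      (permAut e).toEquiv.symm v = FreeGroup.freeGroupCongr e.symm v := fun e v => rfl
  have hproot : ∀ (e : ℕ ≃ ℕ), (permAut e).toEquiv root = root := fun e =>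
    map_one (FreeGroup.freeGroupCongr e)
  have hpsymmroot : ∀ (e : ℕ ≃ ℕ), (permAut e).toEquiv.symm root = root := fun e => by
    rw [hpsymm]; exact map_one (FreeGroup.freeGroupCongr e.symm)
  -- the derivation vanishes on permutation automorphisms
  have hdperm : ∀ (e : ℕ ≃ ℕ) (x : lpT 2) (v : V),
      dtree (permAut e).toEquiv (x : V → ℂ) v = 0 := by
    intro e x v
    rw [dtree_apply]
    by_cases hv : v = root
    · rw [if_pos hv, if_pos (by rw [hv]; exact hpsymmroot e), sub_zero]
    · have hv2 : (permAut e).toEquiv.symm v ≠ root := fun hc => by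
        apply hv
        have := congrArg (permAut e).toEquiv hc
        rwa [Equiv.apply_symm_apply, hproot] at this
      rw [if_neg hv, if_neg hv2, hpsymm, hpsymm, parent_congr, sub_self]
  -- hence `A` is equivariant for permutation automorphisms
  have hinv : ∀ (e : ℕ ≃ ℕ) (x : lpT 2) (v : V),
      ((A (lam 2 (permAut e).toEquiv x) : lpT 2) : V → ℂ) v
        = ((A x : lpT 2) : V → ℂ) (FreeGroup.freeGroupCongr e.symm v) := by
    intro e x v
    have := congrFun (hA (permAut e) x) v
    rw [hdperm e x v] at this
    have h2 : ((A (lam 2 (permAut e).toEquiv x) : lpT 2) : V → ℂ) v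
        - ((A x : lpT 2) : V → ℂ) ((permAut e).toEquiv.symm v) = 0 := (this).symm
    rw [sub_eq_zero] at h2
    rw [h2, hpsymm]
  set a : V := FreeGroup.of 0 with ha
  -- the key identity coming from the translation automorphism
  have hkey : ((A (δ a) : lpT 2) : V → ℂ) root - ((A (δ root) : lpT 2) : V → ℂ) a⁻¹ = -1 := by
    have := congrFun (hA (transAut a) (δ root)) root
    have hsr : (transAut a).toEquiv.symm root = a⁻¹ := by
      show a⁻¹ * root = a⁻¹
      rw [show (root : V) = 1 from rfl, mul_one]
    have hlhs : dtree (transAut a).toEquiv ((δ root : lpT 2) : V → ℂ) root = -1 := by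
      rw [dtree_apply, if_pos rfl, hsr, if_neg (inv_of_ne_root 0), parent_inv_of,
        hδdef, single_apply, if_pos rfl]
      norm_num
    rw [hlhs] at this
    have hlam : lam 2 (transAut a).toEquiv (δ root) = δ a := by
      rw [hδdef]
      show lam 2 (transAut a).toEquiv (lp.single 2 root 1) = lp.single 2 a 1
      rw [lam_single]
      congr 1
    have h2 : ((A (lam 2 (transAut a).toEquiv (δ root)) : lpT 2) : V → ℂ) root
        - ((A (δ root) : lpT 2) : V → ℂ) ((transAut a).toEquiv.symm root) = -1 := this.symm
    rw [hlam, hsr] at h2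
    exact h2
  -- the coefficient `⟨δ_{a⁻¹}, A δ_root⟩` vanishes by square-summability and symmetry
  have hu : ((A (δ root) : lpT 2) : V → ℂ) a⁻¹ = 0 := by
    apply const_eq_zero (A (δ root)) (fun i => (FreeGroup.of i)⁻¹)
      (fun i j hij => FreeGroup.of_injective (inv_injective hij))
    intro i
    have hlam : lam 2 (permAut (Equiv.swap 0 i)).toEquiv (δ root) = δ root := by
      rw [hδdef]
      show lam 2 _ (lp.single 2 root 1) = lp.single 2 root 1
      rw [lam_single, hproot]
    have := hinv (Equiv.swap 0 i) (δ root) ((FreeGroup.of i)⁻¹)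
    rw [hlam] at this
    rw [this]
    have h5 : FreeGroup.freeGroupCongr (Equiv.swap 0 i).symm (FreeGroup.of i) = a := by
      show FreeGroup.map (⇑(Equiv.swap 0 i).symm) (FreeGroup.of i) = a
      rw [FreeGroup.map.of, Equiv.symm_swap, Equiv.swap_apply_right]
    rw [map_inv, h5]
  have hAa : ((A (δ a) : lpT 2) : V → ℂ) root = -1 := by
    have := hkey
    rw [hu, sub_zero] at this
    exact this
  -- by symmetry all coefficients `⟨δ_root, A δ_{of i}⟩` equal `-1`
  have hw : ∀ i : ℕ, ((A (δ (FreeGroup.of i)) : lpT 2) : V → ℂ) root = -1 := by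
    intro i
    have hlam : lam 2 (permAut (Equiv.swap 0 i)).toEquiv (δ a) = δ (FreeGroup.of i) := by
      rw [hδdef]
      show lam 2 _ (lp.single 2 a 1) = lp.single 2 (FreeGroup.of i) 1
      rw [lam_single]
      congr 1
    have := hinv (Equiv.swap 0 i) (δ a) root
    rw [hlam] at this
    rw [this, show FreeGroup.freeGroupCongr (Equiv.swap 0 i).symm root = root from map_one _]
    exact hAa
  -- but then the adjoint of `A` maps `δ_root` to a function constantly `-1` on the generators
  have hadj : ∀ i : ℕ,
      ((ContinuousLinearMap.adjoint A (δ root) : lpT 2) : V → ℂ) (FreeGroup.of i) = -1 := by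
    intro i
    rw [adjoint_apply]
    have hin : (inner ℂ (δ root) (A (lp.single 2 (FreeGroup.of i) 1)) : ℂ) = -1 := by
      rw [hδdef]
      show (inner ℂ (lp.single 2 root (1:ℂ)) (A (lp.single 2 (FreeGroup.of i) 1)) : ℂ) = -1
      rw [lp.inner_single_left]
      have := hw i
      rw [hδdef] at this
      simpa [inner] using this
    rw [hin]
    simp
  have : (-1 : ℂ) = 0 :=
    const_eq_zero (ContinuousLinearMap.adjoint A (δ root)) (fun i => FreeGroup.of i)
      FreeGroup.of_injective (-1) hadj
  norm_num at this
end
end
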